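/- Under the stated tail assumption on ν, there exists a constant C > 0 such that for all 0 ≤ x ≤ y ≤ 1 one has 0 ≤ H(y) − H(x) ≤ C (y − x) y^β. -/

import Mathlib

set_option autoImplicit false

open MeasureTheory Filter Set


lemma aux_mul_exp_le_one {a : ℝ} (ha : 0 ≤ a) : a * Real.exp (-a) ≤ 1 := by
  have h1 : a ≤ Real.exp a := by have := Real.add_one_le_exp a; linarith
  calc a * Real.exp (-a) ≤ Real.exp a * Real.exp (-a) :=
        mul_le_mul_of_nonneg_right h1 (Real.exp_nonneg _)
    _ = 1 := by rw [← Real.exp_add]; simp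

lemma aux_gprime_le {t u : ℝ} (ht : 0 ≤ t) (hu : 0 ≤ u) :
    (1 - Real.exp (-(t*u))) + t*u*Real.exp (-(t*u)) ≤ 2 * min 1 (t*u) := by
  have htu : 0 ≤ t*u := mul_nonneg ht hu
  have h1 : 1 - Real.exp (-(t*u)) ≤ min 1 (t*u) := by
    refine le_min ?_ ?_
    · have := Real.exp_nonneg (-(t*u)); linarith
    · have := Real.add_one_le_exp (-(t*u)); linarith
  have h2 : t*u*Real.exp (-(t*u)) ≤ min 1 (t*u) := by
    refine le_min (aux_mul_exp_le_one htu) ?_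
    have : Real.exp (-(t*u)) ≤ 1 := by rw [Real.exp_le_one_iff]; linarith
    calc t*u*Real.exp (-(t*u)) ≤ t*u*1 := mul_le_mul_of_nonneg_left this htu
      _ = t*u := by ring
  linarith

-- FTC: ∫_0^z g' = z (1 - e^{-zu})
lemma aux_ftc (u : ℝ) (z : ℝ) :
    ∫ t in (0)..z, ((1 - Real.exp (-(t*u))) + t*u*Real.exp (-(t*u)))
      = z * (1 - Real.exp (-(z*u))) := by
  have hderiv : ∀ t ∈ Set.uIcc (0:ℝ) z,
      HasDerivAt (fun s : ℝ => s * (1 - Real.exp (-(s*u))))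
        ((1 - Real.exp (-(t*u))) + t*u*Real.exp (-(t*u))) t := by
    intro t _
    have h1 : HasDerivAt (fun s : ℝ => -(s*u)) (-u) t := by
      have h0 := ((hasDerivAt_id t).mul_const u).neg
      simp only [id, one_mul] at h0
      exact h0
    have h2 : HasDerivAt (fun s : ℝ => Real.exp (-(s*u))) (Real.exp (-(t*u)) * (-u)) t :=
      (Real.hasDerivAt_exp _).comp t h1
    have h3 : HasDerivAt (fun s : ℝ => 1 - Real.exp (-(s*u)))
        (-(Real.exp (-(t*u)) * (-u))) t := (h2.const_sub 1)
    have h4 : HasDerivAt (fun s : ℝ => s * (1 - Real.exp (-(s*u))))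
        (1 * (1 - Real.exp (-(t*u))) + t * -(Real.exp (-(t*u)) * (-u))) t :=
      (hasDerivAt_id t).mul h3
    convert h4 using 1
    ring
  have hcont : IntervalIntegrable
      (fun t : ℝ => (1 - Real.exp (-(t*u))) + t*u*Real.exp (-(t*u))) volume 0 z := by
    apply Continuous.intervalIntegrable; fun_prop
  have := intervalIntegral.integral_eq_sub_of_hasDerivAt hderiv hcont
  simp only [this]
  simp

lemma aux_key (ν : Measure ℝ) [IsProbabilityMeasure ν]
    (hsupp : ν (Iio 0) = 0)
    (β cν M : ℝ) (hβ : β ∈ Ioo (0:ℝ) 1) (hcν : 0 < cν) (hM : 1 ≤ M)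
    (htail : ∀ t, M ≤ t → (ν (Ioi t)).toReal ≤ 2*cν * t ^ (-(1+β)))
    (u : ℝ) (hu : u ∈ Ioc (0:ℝ) 1) :
    ∫ z, z * (1 - Real.exp (-(z*u))) ∂ν
      ≤ (M^2 + 4*cν*(1/(1-β) + 1/β)) * u ^ β := by
  obtain ⟨hu0, hu1⟩ := hu
  have hβ0 := hβ.1
  have hβ1 := hβ.2
  have hz : ∀ᵐ z ∂ν, 0 ≤ z := by
    rw [ae_iff]
    convert hsupp using 2
    ext z; simp [Iio, not_le]
  set g : ℝ → ℝ := fun t => (1 - Real.exp (-(t*u))) + t*u*Real.exp (-(t*u)) with hg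
  have g_cont : Continuous g := by fun_prop
  have g_nn : ∀ t, 0 ≤ t → 0 ≤ g t := by
    intro t ht
    have htu : 0 ≤ t*u := mul_nonneg ht hu0.le
    have : Real.exp (-(t*u)) ≤ 1 := by rw [Real.exp_le_one_iff]; linarith
    have := Real.exp_nonneg (-(t*u))
    simp only [hg]
    nlinarith
  -- layercake
  have lc := lintegral_comp_eq_lintegral_meas_lt_mul (g := g) (f := fun z : ℝ => z) ν
    hz aemeasurable_id
    (fun t _ => g_cont.intervalIntegrable 0 t)
    ((ae_restrict_iff' measurableSet_Ioi).2 (Filter.Eventually.of_forall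
      (fun t ht => g_nn t (le_of_lt ht))))
  have lhs_eq : ∫⁻ z, ENNReal.ofReal (∫ t in (0)..z, g t) ∂ν
      = ∫⁻ z, ENNReal.ofReal (z * (1 - Real.exp (-(z*u)))) ∂ν := by
    congr 1; funext z; rw [aux_ftc u z]
  have set_eq : ∀ t : ℝ, {a : ℝ | t < a} = Ioi t := fun t => rfl
  rw [lhs_eq] at lc
  -- bound the RHS
  have hM0 : (0:ℝ) < M := lt_of_lt_of_le one_pos hM
  have hu_le : u ≤ u ^ β := by
    have := Real.rpow_le_rpow_of_exponent_ge hu0 hu1 hβ1.le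
    rwa [Real.rpow_one] at this
  have huβ_pos : 0 < u ^ β := Real.rpow_pos_of_pos hu0 β
  set A : ℝ := 1/u with hA
  have hA0 : 0 < A := by positivity
  -- Term 1 : over Ioc 0 M
  have term1 : ∫⁻ t in Ioc 0 M, ν (Ioi t) * ENNReal.ofReal (g t)
      ≤ ENNReal.ofReal (M^2 * u^β) := by
    have step : ∫⁻ t in Ioc 0 M, ν (Ioi t) * ENNReal.ofReal (g t)
        ≤ ∫⁻ t in Ioc 0 M, ENNReal.ofReal (2*(t*u)) := by
      apply setLIntegral_mono (by fun_prop)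
      intro t ht
      calc ν (Ioi t) * ENNReal.ofReal (g t) ≤ 1 * ENNReal.ofReal (2*(t*u)) := by
            refine mul_le_mul' prob_le_one (ENNReal.ofReal_le_ofReal ?_)
            calc g t ≤ 2 * min 1 (t*u) := aux_gprime_le ht.1.le hu0.le
              _ ≤ 2*(t*u) := by
                  have := min_le_right (1:ℝ) (t*u); linarith
        _ = ENNReal.ofReal (2*(t*u)) := one_mul _
    refine step.trans ?_
    rw [← ofReal_integral_eq_lintegral_ofReal]
    · apply ENNReal.ofReal_le_ofReal
      have : ∫ t in Ioc 0 M, 2*(t*u) = u * M^2 := by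
        rw [← intervalIntegral.integral_of_le hM0.le]
        have : (fun t : ℝ => 2*(t*u)) = fun t : ℝ => (2*u)*t := by funext t; ring
        rw [this, intervalIntegral.integral_const_mul, integral_id]
        ring
      rw [this]
      calc u * M^2 ≤ u^β * M^2 := mul_le_mul_of_nonneg_right hu_le (by positivity)
        _ = M^2 * u^β := by ring
    · exact (by fun_prop : Continuous fun t : ℝ => 2*(t*u)).integrableOn_Ioc
    · exact (ae_restrict_iff' measurableSet_Ioc).2 (Filter.Eventually.of_forall
        (fun t ht => by
          simp only [Pi.zero_apply]
          nlinarith [ht.1.le, hu0.le]))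
  -- Term 2 : over Ioi M
  have tail' : ∀ t : ℝ, M ≤ t → ν (Ioi t) ≤ ENNReal.ofReal (2*cν * t ^ (-(1+β))) := by
    intro t ht
    exact (ENNReal.le_ofReal_iff_toReal_le (measure_ne_top ν _)
      (mul_nonneg (by positivity) (Real.rpow_nonneg (le_trans hM0.le ht) _))).2 (htail t ht)
  have term2 : ∫⁻ t in Ioi M, ν (Ioi t) * ENNReal.ofReal (g t)
      ≤ ENNReal.ofReal (4*cν/(1-β) * u^β) + ENNReal.ofReal (4*cν/β * u^β) := by
    have step : ∫⁻ t in Ioi M, ν (Ioi t) * ENNReal.ofReal (g t)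
        ≤ ∫⁻ t in Ioi 0, ENNReal.ofReal (4*cν * (min 1 (t*u) * t ^ (-(1+β)))) := by
      refine le_trans ?_ (lintegral_mono_set (Ioi_subset_Ioi hM0.le))
      apply setLIntegral_mono (by fun_prop)
      intro t ht
      have ht0 : (0:ℝ) < t := lt_of_lt_of_le hM0 ht.le
      calc ν (Ioi t) * ENNReal.ofReal (g t)
          ≤ ENNReal.ofReal (2*cν * t ^ (-(1+β))) * ENNReal.ofReal (2 * min 1 (t*u)) :=
            mul_le_mul' (tail' t ht.le)
              (ENNReal.ofReal_le_ofReal (aux_gprime_le ht0.le hu0.le))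
        _ = ENNReal.ofReal ((2*cν * t ^ (-(1+β))) * (2 * min 1 (t*u))) :=
            (ENNReal.ofReal_mul (by positivity)).symm
        _ = ENNReal.ofReal (4*cν * (min 1 (t*u) * t ^ (-(1+β)))) := by ring_nf
    refine step.trans ?_
    rw [show Ioi (0:ℝ) = Ioc 0 A ∪ Ioi A from (Ioc_union_Ioi_eq_Ioi hA0.le).symm,
      lintegral_union measurableSet_Ioi Ioc_disjoint_Ioi_same]
    gcongr
    · -- part a
      have pw : ∀ t ∈ Ioc (0:ℝ) A,
          ENNReal.ofReal (4*cν * (min 1 (t*u) * t ^ (-(1+β))))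
            ≤ ENNReal.ofReal ((4*cν*u) * t ^ (-β)) := by
        intro t ht
        apply ENNReal.ofReal_le_ofReal
        have ht0 : (0:ℝ) < t := ht.1
        have hr : t ^ (-(1+β)) * t = t ^ (-β) := by
          nth_rewrite 2 [← Real.rpow_one t]
          rw [← Real.rpow_add ht0, show -(1+β)+1 = -β by ring]
        have h1 : min 1 (t*u) * t ^ (-(1+β)) ≤ (t*u) * t ^ (-(1+β)) :=
          mul_le_mul_of_nonneg_right (min_le_right _ _)
            (Real.rpow_nonneg ht0.le _)
        calc 4*cν * (min 1 (t*u) * t ^ (-(1+β)))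
            ≤ 4*cν * ((t*u) * t ^ (-(1+β))) := by nlinarith [hcν.le]
          _ = (4*cν*u) * (t ^ (-(1+β)) * t) := by ring
          _ = (4*cν*u) * t ^ (-β) := by rw [hr]
      calc ∫⁻ t in Ioc 0 A, ENNReal.ofReal (4*cν * (min 1 (t*u) * t ^ (-(1+β))))
          ≤ ∫⁻ t in Ioc 0 A, ENNReal.ofReal ((4*cν*u) * t ^ (-β)) :=
            setLIntegral_mono (by fun_prop) pw
        _ ≤ ENNReal.ofReal (4*cν/(1-β) * u^β) := by
            rw [← ofReal_integral_eq_lintegral_ofReal]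
            · apply ENNReal.ofReal_le_ofReal
              rw [integral_const_mul]
              have hint : ∫ t in Ioc 0 A, t ^ (-β) = A ^ (1-β) / (1-β) := by
                rw [← intervalIntegral.integral_of_le hA0.le,
                  integral_rpow (Or.inl (by linarith))]
                rw [Real.zero_rpow (by linarith), show -β + 1 = 1 - β by ring]
                ring
              rw [hint]
              have hAu : u * A ^ (1-β) = u^β := by
                rw [hA, one_div, Real.inv_rpow hu0.le]
                have huβ : u^β * u^(1-β) = u := by rw [← Real.rpow_add hu0]; norm_num
                field_simp [(Real.rpow_pos_of_pos hu0 (1-β)).ne']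
                linarith [huβ]
              have : 4*cν*u * (A ^ (1-β) / (1-β)) = 4*cν/(1-β) * u^β := by
                rw [← hAu]; ring
              linarith
            · have := intervalIntegral.intervalIntegrable_rpow'
                (a := 0) (b := A) (by linarith : (-1:ℝ) < -β)
              rw [intervalIntegrable_iff_integrableOn_Ioc_of_le hA0.le] at this
              exact this.const_mul _
            · exact (ae_restrict_iff' measurableSet_Ioc).2 (Filter.Eventually.of_forall
                (fun t ht => by
                  simp only [Pi.zero_apply]
                  have := Real.rpow_nonneg ht.1.le (-β); positivity))
    · -- part b
      have pw : ∀ t ∈ Ioi A,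
          ENNReal.ofReal (4*cν * (min 1 (t*u) * t ^ (-(1+β))))
            ≤ ENNReal.ofReal ((4*cν) * t ^ (-(1+β))) := by
        intro t ht
        apply ENNReal.ofReal_le_ofReal
        have ht0 : (0:ℝ) < t := lt_trans hA0 ht
        have h1 : min 1 (t*u) * t ^ (-(1+β)) ≤ 1 * t ^ (-(1+β)) :=
          mul_le_mul_of_nonneg_right (min_le_left _ _) (Real.rpow_nonneg ht0.le _)
        nlinarith [hcν.le]
      calc ∫⁻ t in Ioi A, ENNReal.ofReal (4*cν * (min 1 (t*u) * t ^ (-(1+β))))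
          ≤ ∫⁻ t in Ioi A, ENNReal.ofReal ((4*cν) * t ^ (-(1+β))) :=
            setLIntegral_mono (by fun_prop) pw
        _ ≤ ENNReal.ofReal (4*cν/β * u^β) := by
            rw [← ofReal_integral_eq_lintegral_ofReal]
            · apply ENNReal.ofReal_le_ofReal
              rw [integral_const_mul]
              have hint : ∫ t in Ioi A, t ^ (-(1+β)) = A ^ (-β) / β := by
                rw [integral_Ioi_rpow_of_lt (by linarith) hA0,
                  show -(1+β) + 1 = -β by ring]
                field_simp
              rw [hint, hA, one_div, Real.inv_rpow hu0.le, Real.rpow_neg hu0.le, inv_inv]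
              exact le_of_eq (by ring)
            · exact ((integrableOn_Ioi_rpow_of_lt (by linarith) hA0).const_mul _)
            · exact (ae_restrict_iff' measurableSet_Ioi).2 (Filter.Eventually.of_forall
                (fun t ht => by
                  simp only [Pi.zero_apply]
                  have := Real.rpow_nonneg (le_of_lt (lt_trans hA0 ht)) (-(1+β))
                  positivity))
  -- combine
  have hsplit : (Ioi (0:ℝ)) = Ioc 0 M ∪ Ioi M := (Ioc_union_Ioi_eq_Ioi hM0.le).symm
  have rhs_le : ∫⁻ t in Ioi (0:ℝ), ν (Ioi t) * ENNReal.ofReal (g t)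
      ≤ ENNReal.ofReal ((M^2 + 4*cν*(1/(1-β) + 1/β)) * u ^ β) := by
    rw [hsplit, lintegral_union measurableSet_Ioi Ioc_disjoint_Ioi_same]
    calc _ ≤ ENNReal.ofReal (M^2 * u^β)
        + (ENNReal.ofReal (4*cν/(1-β) * u^β) + ENNReal.ofReal (4*cν/β * u^β)) :=
          add_le_add term1 term2
      _ = ENNReal.ofReal (M^2 * u^β + (4*cν/(1-β) * u^β + 4*cν/β * u^β)) := by
          have hn1 : (0:ℝ) ≤ M^2 * u^β := by positivity
          have hn2 : (0:ℝ) ≤ 4*cν/(1-β) * u^β :=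
            mul_nonneg (div_nonneg (by positivity) (by linarith)) huβ_pos.le
          have hn3 : (0:ℝ) ≤ 4*cν/β * u^β :=
            mul_nonneg (div_nonneg (by positivity) hβ0.le) huβ_pos.le
          rw [← ENNReal.ofReal_add hn2 hn3, ← ENNReal.ofReal_add hn1 (add_nonneg hn2 hn3)]
      _ = ENNReal.ofReal ((M^2 + 4*cν*(1/(1-β) + 1/β)) * u ^ β) := by
          congr 1; ring
  -- conclude
  have int_eq : ∫ z, z * (1 - Real.exp (-(z*u))) ∂ν
      = (∫⁻ z, ENNReal.ofReal (z * (1 - Real.exp (-(z*u)))) ∂ν).toReal := by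
    apply integral_eq_lintegral_of_nonneg_ae
    · filter_upwards [hz] with z hz0
      have he : Real.exp (-(z*u)) ≤ 1 := by
        rw [Real.exp_le_one_iff]; nlinarith [mul_nonneg hz0 hu0.le]
      exact mul_nonneg hz0 (by linarith)
    · exact (by fun_prop : Continuous fun z : ℝ => z * (1 - Real.exp (-(z*u)))).aestronglyMeasurable
  rw [int_eq]
  apply ENNReal.toReal_le_of_le_ofReal
  · have h1 : (0:ℝ) < 1 - β := by linarith
    have h2 : (0:ℝ) ≤ 1/(1-β) + 1/β :=
      add_nonneg (div_pos one_pos h1).le (div_pos one_pos hβ0).le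
    have h3 : (0:ℝ) ≤ M^2 + 4*cν*(1/(1-β)+1/β) := by nlinarith [sq_nonneg M, hcν.le]
    exact mul_nonneg h3 huβ_pos.le
  · exact lc.le.trans rhs_le

theorem stmt1
    (ν : Measure ℝ) [IsProbabilityMeasure ν]
    (hν_supp : ν (Iio 0) = 0)
    (hν_mean : ∫ x, x ∂ν = 1)
    (β cν : ℝ) (hβ : β ∈ Ioo (0 : ℝ) 1) (hcν : 0 < cν)
    (hν_tail : Tendsto (fun x : ℝ => x ^ (1 + β) * (ν (Ioi x)).toReal)
      atTop (nhds cν))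
    (G H : ℝ → ℝ)
    (hG : ∀ s, G s = ∫ z, Real.exp (-z * (1 - s)) ∂ν)
    (hH : ∀ u, H u = G (1 - u) - 1 + u) :
    ∃ C > 0, ∀ x y : ℝ, 0 ≤ x → x ≤ y → y ≤ 1 →
      0 ≤ H y - H x ∧ H y - H x ≤ C * (y - x) * y ^ β := by
  obtain ⟨hβ0, hβ1⟩ := hβ
  -- extract the tail bound constant M
  obtain ⟨M, hM1, htail⟩ : ∃ M : ℝ, 1 ≤ M ∧
      ∀ t, M ≤ t → (ν (Ioi t)).toReal ≤ 2*cν * t ^ (-(1+β)) := by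
    have hev : ∀ᶠ x in atTop, x ^ (1+β) * (ν (Ioi x)).toReal ≤ 2*cν :=
      hν_tail.eventually (eventually_le_nhds (by linarith))
    rw [eventually_atTop] at hev
    obtain ⟨M₀, hM₀⟩ := hev
    refine ⟨max M₀ 1, le_max_right _ _, fun t ht => ?_⟩
    have ht1 : (1:ℝ) ≤ t := le_trans (le_max_right _ _) ht
    have ht0 : (0:ℝ) < t := by linarith
    have h := hM₀ t (le_trans (le_max_left _ _) ht)
    have hinv : t ^ (-(1+β)) * t ^ (1+β) = 1 := by
      rw [← Real.rpow_add ht0, show -(1+β)+(1+β) = (0:ℝ) by ring, Real.rpow_zero]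
    have hnn : 0 ≤ t ^ (-(1+β)) := Real.rpow_nonneg ht0.le _
    calc (ν (Ioi t)).toReal = (t ^ (-(1+β)) * t ^ (1+β)) * (ν (Ioi t)).toReal := by
          rw [hinv, one_mul]
      _ = t ^ (-(1+β)) * (t ^ (1+β) * (ν (Ioi t)).toReal) := by ring
      _ ≤ t ^ (-(1+β)) * (2*cν) := mul_le_mul_of_nonneg_left h hnn
      _ = 2*cν * t ^ (-(1+β)) := by ring
  set C : ℝ := M^2 + 4*cν*(1/(1-β) + 1/β) with hCdef
  have hC : 0 < C := by
    rw [hCdef]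
    have h1 : (0:ℝ) < 1 - β := by linarith
    have h2 : (0:ℝ) ≤ 1/(1-β) + 1/β :=
      add_nonneg (div_pos one_pos h1).le (div_pos one_pos hβ0).le
    nlinarith [mul_nonneg (mul_nonneg (by norm_num : (0:ℝ) ≤ 4) hcν.le) h2,
      sq_nonneg (M-1), hM1]
  refine ⟨C, hC, fun x y hx hxy hy1 => ?_⟩
  have hz : ∀ᵐ z ∂ν, 0 ≤ z := by
    rw [ae_iff]
    convert hν_supp using 2
    ext z; simp [Iio, not_le]
  rcases eq_or_lt_of_le (hx.trans hxy) with h0 | hy0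
  · -- y = 0, hence x = 0
    have hy0 : y = 0 := h0.symm
    have hx0 : x = 0 := le_antisymm (hy0 ▸ hxy) hx
    subst hy0; subst hx0
    simp
  -- 0 < y
  have hy : 0 ≤ y := hy0.le
  -- integrability facts
  have hint1 : Integrable (fun z : ℝ => z) ν := by
    by_contra h
    rw [integral_undef h] at hν_mean
    exact one_ne_zero hν_mean.symm
  have hintE : ∀ u : ℝ, 0 ≤ u → Integrable (fun z : ℝ => Real.exp (-(z*u))) ν := by
    intro u hu
    apply Integrable.mono' (integrable_const 1)
      ((by fun_prop : Continuous fun z : ℝ => Real.exp (-(z*u))).aestronglyMeasurable)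
    filter_upwards [hz] with z hz0
    rw [Real.norm_eq_abs, abs_of_pos (Real.exp_pos _), Real.exp_le_one_iff]
    nlinarith
  have hintM : Integrable (fun z : ℝ => z * (1 - Real.exp (-(z*y)))) ν := by
    apply Integrable.mono' hint1
      ((by fun_prop : Continuous fun z : ℝ => z * (1 - Real.exp (-(z*y)))).aestronglyMeasurable)
    filter_upwards [hz] with z hz0
    have h1 : Real.exp (-(z*y)) ≤ 1 := by rw [Real.exp_le_one_iff]; nlinarith
    have h2 : 0 ≤ Real.exp (-(z*y)) := Real.exp_nonneg _
    rw [Real.norm_eq_abs, abs_of_nonneg (by nlinarith)]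
    nlinarith
  -- the identity for H y - H x
  have hiden : H y - H x = ∫ z, (Real.exp (-(z*y)) - Real.exp (-(z*x)) + z*(y-x)) ∂ν := by
    have e : ∀ u : ℝ, G (1-u) = ∫ z, Real.exp (-(z*u)) ∂ν := by
      intro u
      rw [hG]
      congr 1
      funext z
      ring_nf
    have hsub : Integrable (fun z : ℝ => Real.exp (-(z*y)) - Real.exp (-(z*x))) ν :=
      (hintE y hy).sub (hintE x hx)
    rw [integral_add hsub (hint1.mul_const (y-x)),
      integral_sub (hintE y hy) (hintE x hx), integral_mul_const, hν_mean, hH y, hH x, e y, e x]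
    ring
  -- pointwise bounds
  have pw_lower : ∀ z : ℝ, 0 ≤ z →
      0 ≤ Real.exp (-(z*y)) - Real.exp (-(z*x)) + z*(y-x) := by
    intro z hz0
    have ha : 0 ≤ z*(y-x) := mul_nonneg hz0 (by linarith)
    have heq : Real.exp (-(z*y)) = Real.exp (-(z*x)) * Real.exp (-(z*(y-x))) := by
      rw [← Real.exp_add]; ring_nf
    have h1 : Real.exp (-(z*x)) ≤ 1 := by rw [Real.exp_le_one_iff]; nlinarith
    have h2 : 0 ≤ Real.exp (-(z*x)) := Real.exp_nonneg _
    have h3 : 1 - Real.exp (-(z*(y-x))) ≤ z*(y-x) := by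
      have := Real.add_one_le_exp (-(z*(y-x))); linarith
    have h4 : 0 ≤ 1 - Real.exp (-(z*(y-x))) := by
      have : Real.exp (-(z*(y-x))) ≤ 1 := by rw [Real.exp_le_one_iff]; linarith
      linarith
    rw [heq]; nlinarith
  have pw_upper : ∀ z : ℝ, 0 ≤ z →
      Real.exp (-(z*y)) - Real.exp (-(z*x)) + z*(y-x)
        ≤ (y-x) * (z * (1 - Real.exp (-(z*y)))) := by
    intro z hz0
    have heq : Real.exp (-(z*x)) = Real.exp (-(z*y)) * Real.exp (z*(y-x)) := by
      rw [← Real.exp_add]; ring_nf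
    have h1 : z*(y-x) + 1 ≤ Real.exp (z*(y-x)) := by
      have := Real.add_one_le_exp (z*(y-x)); linarith
    have h2 : 0 ≤ Real.exp (-(z*y)) := Real.exp_nonneg _
    rw [heq]; nlinarith
  constructor
  · rw [hiden]
    exact integral_nonneg_of_ae (by filter_upwards [hz] with z hz0 using pw_lower z hz0)
  · have step1 : H y - H x ≤ (y-x) * ∫ z, z * (1 - Real.exp (-(z*y))) ∂ν := by
      rw [hiden, ← integral_const_mul]
      apply integral_mono_ae
      · exact ((hintE y hy).sub (hintE x hx)).add (hint1.mul_const (y-x))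
      · exact hintM.const_mul (y-x)
      · filter_upwards [hz] with z hz0 using pw_upper z hz0
    have step2 : ∫ z, z * (1 - Real.exp (-(z*y))) ∂ν ≤ C * y ^ β :=
      aux_key ν hν_supp β cν M ⟨hβ0, hβ1⟩ hcν hM1 htail y ⟨hy0, hy1⟩
    calc H y - H x ≤ (y-x) * ∫ z, z * (1 - Real.exp (-(z*y))) ∂ν := step1
      _ ≤ (y-x) * (C * y ^ β) := mul_le_mul_of_nonneg_left step2 (by linarith)
      _ = C * (y - x) * y ^ β := by ring
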